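/- Define φ*(G,π₀) = max over leaves ν of 𝒯(G,π₀) of φ(G,π₀,ν), let ν* be any leaf attaining the maximum, and set C(G,π₀) = (G,π₀)^{R(G,π₀,ν*)}. Then C is well-defined (independent of the choice of ν*) and is a canonical form: C(G,π₀) ≅ (G,π₀) and C(G^g,π₀^g) = C(G,π₀) for all g ∈ S_n. -/

import Mathlib

/-- Relabelling action of a permutation on a graph: `v^g` adjacent to `w^g` iff `v` adjacent `w`. -/
def gactG {n : ℕ} (g : Equiv.Perm (Fin n)) (G : SimpleGraph (Fin n)) : SimpleGraph (Fin n) where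
  Adj v w := G.Adj (g⁻¹ v) (g⁻¹ w)
  symm := ⟨fun _ _ h => G.adj_symm h⟩
  loopless := ⟨fun _ h => G.irrefl h⟩

/-- Relabelling action of a permutation on a colouring. -/
def gactC {n : ℕ} (g : Equiv.Perm (Fin n)) (π : Fin n → ℕ) : Fin n → ℕ :=
  fun v => π (g⁻¹ v)

/-- A colouring of `V`: a function surjective onto `{1,…,k}` for some `k`. -/
def IsCol {n : ℕ} (π : Fin n → ℕ) : Prop := ∃ k, Set.range π = Set.Icc 1 k

/-- `π'` is finer than or equal to `π`. -/
def FinerC {n : ℕ} (π' π : Fin n → ℕ) : Prop := ∀ v w, π v < π w → π' v < π' w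

/-- Nodes of the search tree with child rule given by the target cells `Tc`. -/
inductive IsTNode {n : ℕ} (Tc : List (Fin n) → Set (Fin n)) : List (Fin n) → Prop
  | root : IsTNode Tc []
  | child {ν : List (Fin n)} {w : Fin n} :
      IsTNode Tc ν → w ∈ Tc ν → IsTNode Tc (ν ++ [w])

/-- The labelled graph `G^π` for a (discrete) colouring `π`, as a set of labelled edges. -/
def relabelSet {n : ℕ} (G : SimpleGraph (Fin n)) (π : Fin n → ℕ) : Set (ℕ × ℕ) :=
  {p | ∃ v w, G.Adj v w ∧ π v = p.1 ∧ π w = p.2}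

/-- Equitable colouring: same-coloured vertices have equally many neighbours of each colour. -/
def IsEquit {n : ℕ} (G : SimpleGraph (Fin n)) (π : Fin n → ℕ) : Prop :=
  ∀ v w, π v = π w → ∀ j,
    {u | G.Adj v u ∧ π u = j}.ncard = {u | G.Adj w u ∧ π u = j}.ncard

/-- `ν` is a leaf of `𝒯(G,π₀)` attaining the maximum value of the invariant `φ`. -/
def MaxLeaf {n : ℕ} {Ω : Type*} [LinearOrder Ω]
    (R : SimpleGraph (Fin n) → (Fin n → ℕ) → List (Fin n) → (Fin n → ℕ))
    (T : SimpleGraph (Fin n) → (Fin n → ℕ) → List (Fin n) → Set (Fin n))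
    (φ : SimpleGraph (Fin n) → (Fin n → ℕ) → List (Fin n) → Ω)
    (G : SimpleGraph (Fin n)) (π₀ : Fin n → ℕ) (ν : List (Fin n)) : Prop :=
  IsTNode (T G π₀) ν ∧ Function.Injective (R G π₀ ν) ∧
    ∀ μ, IsTNode (T G π₀) μ → Function.Injective (R G π₀ μ) → φ G π₀ μ ≤ φ G π₀ ν


section Aux

lemma gactG_mul {n : ℕ} (g h : Equiv.Perm (Fin n)) (G : SimpleGraph (Fin n)) :
    gactG g (gactG h G) = gactG (g * h) G := by
  ext v w; simp [gactG, mul_inv_rev]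

lemma gactC_mul {n : ℕ} (g h : Equiv.Perm (Fin n)) (π : Fin n → ℕ) :
    gactC g (gactC h π) = gactC (g * h) π := by
  funext v; simp [gactC, mul_inv_rev]

lemma gactG_inv_cancel {n : ℕ} (g : Equiv.Perm (Fin n)) (G : SimpleGraph (Fin n)) :
    gactG g⁻¹ (gactG g G) = G := by
  ext v w; simp [gactG]

lemma gactC_inv_cancel {n : ℕ} (g : Equiv.Perm (Fin n)) (π : Fin n → ℕ) :
    gactC g⁻¹ (gactC g π) = π := by
  funext v; simp [gactC]

lemma mono_key {n : ℕ} (f f' : Fin n → ℕ) (hf : Monotone f) (hf' : Monotone f')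
    (e : Equiv.Perm (Fin n)) (h : ∀ j, f' j = f (e j)) (i : Fin n) : ¬ f' i < f i := by
  intro hlt
  have hsub : ∀ j ∈ Finset.Iic i, e j ∈ Finset.Iio i := by
    intro j hj
    simp only [Finset.mem_Iic] at hj
    simp only [Finset.mem_Iio]
    by_contra hle
    push_neg at hle
    have h1 : f i ≤ f (e j) := hf hle
    have h2 : f' j ≤ f' i := hf' hj
    rw [h j] at h2
    omega
  have hcard := Finset.card_le_card_of_injOn (fun j => e j) hsub
    (fun a _ b _ hab => e.injective hab)
  rw [Fin.card_Iic, Fin.card_Iio] at hcard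
  omega

lemma mono_perm_eq {n : ℕ} {f f' : Fin n → ℕ} (hf : Monotone f) (hf' : Monotone f')
    (e : Equiv.Perm (Fin n)) (h : ∀ j, f' j = f (e j)) : f = f' := by
  funext i
  rcases lt_trichotomy (f i) (f' i) with hlt | heq | hgt
  · exact absurd hlt
      (mono_key f' f hf' hf e⁻¹ (fun j => by rw [h (e⁻¹ j), Equiv.Perm.inv_def, Equiv.apply_symm_apply]) i)
  · exact heq
  · exact absurd hgt (mono_key f f' hf hf' e h i)

lemma node_map {n : ℕ} (T : SimpleGraph (Fin n) → (Fin n → ℕ) → List (Fin n) → Set (Fin n))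
    (hT3 : ∀ G π ν (g : Equiv.Perm (Fin n)),
      T (gactG g G) (gactC g π) (ν.map g) = g '' (T G π ν))
    (G : SimpleGraph (Fin n)) (π : Fin n → ℕ) (g : Equiv.Perm (Fin n))
    {ν : List (Fin n)} (h : IsTNode (T G π) ν) :
    IsTNode (T (gactG g G) (gactC g π)) (ν.map g) := by
  induction h with
  | root => exact IsTNode.root
  | child hν hw ih =>
      rw [List.map_append]
      exact IsTNode.child ih (by rw [hT3]; exact ⟨_, hw, rfl⟩)

lemma map_inv_map {n : ℕ} (g : Equiv.Perm (Fin n)) (μ : List (Fin n)) :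
    (μ.map (g⁻¹ : Equiv.Perm (Fin n))).map g = μ := by
  rw [List.map_map]
  have hid : (g : Fin n → Fin n) ∘ (g⁻¹ : Equiv.Perm (Fin n)) = id := by
    funext x; simp
  rw [hid, List.map_id]

/-- Core well-definedness lemma: two φ-maximal leaves give the same canonical form. -/
lemma wd_core {n : ℕ} {Ω : Type*} [LinearOrder Ω]
    (R : SimpleGraph (Fin n) → (Fin n → ℕ) → List (Fin n) → (Fin n → ℕ))
    (T : SimpleGraph (Fin n) → (Fin n → ℕ) → List (Fin n) → Set (Fin n))
    (hR1 : ∀ G π ν, FinerC (R G π ν) π)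
    (φ : SimpleGraph (Fin n) → (Fin n → ℕ) → List (Fin n) → Ω)
    (hφ2 : ∀ (G : SimpleGraph (Fin n)) (π₀ : Fin n → ℕ) (ν ν' : List (Fin n)),
      IsTNode (T G π₀) ν → IsTNode (T G π₀) ν' →
      Function.Injective (R G π₀ ν) → Function.Injective (R G π₀ ν') →
      (φ G π₀ ν = φ G π₀ ν' ↔ relabelSet G (R G π₀ ν) = relabelSet G (R G π₀ ν')))
    (G : SimpleGraph (Fin n)) (π₀ : Fin n → ℕ)
    (ν ν' : List (Fin n)) (σ σ' : Equiv.Perm (Fin n))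
    (hν : MaxLeaf R T φ G π₀ ν) (hν' : MaxLeaf R T φ G π₀ ν')
    (hσ : ∀ v, R G π₀ ν v = (σ v : ℕ) + 1) (hσ' : ∀ v, R G π₀ ν' v = (σ' v : ℕ) + 1) :
    (gactG σ G, gactC σ π₀) = (gactG σ' G, gactC σ' π₀) := by
  obtain ⟨hn, hi, hm⟩ := hν
  obtain ⟨hn', hi', hm'⟩ := hν'
  have hφeq : φ G π₀ ν = φ G π₀ ν' := le_antisymm (hm' ν hn hi) (hm ν' hn' hi')
  have hrel := (hφ2 G π₀ ν ν' hn hn' hi hi').mp hφeq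
  -- graph part
  have hG : ∀ (μ μ' : List (Fin n)) (ρ ρ' : Equiv.Perm (Fin n)),
      relabelSet G (R G π₀ μ) = relabelSet G (R G π₀ μ') →
      (∀ v, R G π₀ μ v = (ρ v : ℕ) + 1) → (∀ v, R G π₀ μ' v = (ρ' v : ℕ) + 1) →
      ∀ v w, G.Adj (ρ⁻¹ v) (ρ⁻¹ w) → G.Adj (ρ'⁻¹ v) (ρ'⁻¹ w) := by
    intro μ μ' ρ ρ' hrl hρ hρ' v w ha
    have hm1 : (((v : ℕ) + 1, (w : ℕ) + 1) : ℕ × ℕ) ∈ relabelSet G (R G π₀ μ) :=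
      ⟨ρ⁻¹ v, ρ⁻¹ w, ha, by rw [hρ]; simp, by rw [hρ]; simp⟩
    rw [hrl] at hm1
    obtain ⟨a, b, hab, h1, h2⟩ := hm1
    rw [hρ' a] at h1
    rw [hρ' b] at h2
    have ha' : ρ' a = v := Fin.ext (by simpa using h1)
    have hb' : ρ' b = w := Fin.ext (by simpa using h2)
    rw [show ρ'⁻¹ v = a from by rw [← ha']; simp,
        show ρ'⁻¹ w = b from by rw [← hb']; simp]
    exact hab
  have hGeq : gactG σ G = gactG σ' G := by
    ext v w
    exact ⟨fun h => hG ν ν' σ σ' hrel hσ hσ' v w h,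
           fun h => hG ν' ν σ' σ hrel.symm hσ' hσ v w h⟩
  -- colouring part
  have hmono : ∀ (μ : List (Fin n)) (ρ : Equiv.Perm (Fin n)),
      (∀ v, R G π₀ μ v = (ρ v : ℕ) + 1) → Monotone (gactC ρ π₀) := by
    intro μ ρ hρ v w hvw
    by_contra hlt
    push_neg at hlt
    have hfin : π₀ (ρ⁻¹ w) < π₀ (ρ⁻¹ v) := hlt
    have hRlt := hR1 G π₀ μ (ρ⁻¹ w) (ρ⁻¹ v) hfin
    rw [hρ, hρ] at hRlt
    simp only [Equiv.Perm.inv_def, Equiv.apply_symm_apply] at hRlt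
    have hvw' : (v : ℕ) ≤ (w : ℕ) := hvw
    omega
  have hCeq : gactC σ π₀ = gactC σ' π₀ :=
    mono_perm_eq (hmono ν σ hσ) (hmono ν' σ' hσ') (σ * σ'⁻¹)
      (fun j => by simp [gactC, Equiv.Perm.mul_apply])
  rw [hGeq, hCeq]

end Aux

/-- C(G,π₀) := (G,π₀)^{R(G,π₀,ν*)} for a φ-maximal leaf ν* is well defined and is a canonical form. -/
theorem stmt12 {n : ℕ} {Ω : Type*} [LinearOrder Ω]
    (R : SimpleGraph (Fin n) → (Fin n → ℕ) → List (Fin n) → (Fin n → ℕ))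
    (T : SimpleGraph (Fin n) → (Fin n → ℕ) → List (Fin n) → Set (Fin n))
    (hR1 : ∀ G π ν, FinerC (R G π ν) π)
    (hR2 : ∀ G π ν, ∀ v ∈ ν, (R G π ν) ⁻¹' {R G π ν v} = {v})
    (hR3 : ∀ G π ν (g : Equiv.Perm (Fin n)),
      R (gactG g G) (gactC g π) (ν.map g) = gactC g (R G π ν))
    (hT1 : ∀ G π ν, Function.Injective (R G π ν) → T G π ν = ∅)
    (hT2 : ∀ G π ν, ¬ Function.Injective (R G π ν) →
      ∃ j, T G π ν = (R G π ν) ⁻¹' {j} ∧ ∃ v w, v ∈ T G π ν ∧ w ∈ T G π ν ∧ v ≠ w)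
    (hT3 : ∀ G π ν (g : Equiv.Perm (Fin n)),
      T (gactG g G) (gactC g π) (ν.map g) = g '' (T G π ν))
    (φ : SimpleGraph (Fin n) → (Fin n → ℕ) → List (Fin n) → Ω)
    (hφ1 : ∀ (G : SimpleGraph (Fin n)) (π₀ : Fin n → ℕ) (ν ν' : List (Fin n)),
      IsTNode (T G π₀) ν → IsTNode (T G π₀) ν' → ν ≠ ν' → ν.length = ν'.length →
      φ G π₀ ν < φ G π₀ ν' →
      ∀ ν₁ ν₁', IsTNode (T G π₀) ν₁ → ν <+: ν₁ → Function.Injective (R G π₀ ν₁) →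
        IsTNode (T G π₀) ν₁' → ν' <+: ν₁' → Function.Injective (R G π₀ ν₁') →
        φ G π₀ ν₁ < φ G π₀ ν₁')
    (hφ2 : ∀ (G : SimpleGraph (Fin n)) (π₀ : Fin n → ℕ) (ν ν' : List (Fin n)),
      IsTNode (T G π₀) ν → IsTNode (T G π₀) ν' →
      Function.Injective (R G π₀ ν) → Function.Injective (R G π₀ ν') →
      (φ G π₀ ν = φ G π₀ ν' ↔ relabelSet G (R G π₀ ν) = relabelSet G (R G π₀ ν')))
    (hφ3 : ∀ (G : SimpleGraph (Fin n)) (π₀ : Fin n → ℕ) (ν : List (Fin n))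
      (g : Equiv.Perm (Fin n)), φ (gactG g G) (gactC g π₀) (ν.map g) = φ G π₀ ν)
    (hRcol : ∀ G π ν, IsCol (R G π ν))
    (G : SimpleGraph (Fin n)) (π₀ : Fin n → ℕ) (hπ₀ : IsCol π₀) :
    -- well-definedness: any two φ-maximal leaves give the same canonical form
    (∀ (ν ν' : List (Fin n)) (σ σ' : Equiv.Perm (Fin n)),
      MaxLeaf R T φ G π₀ ν → MaxLeaf R T φ G π₀ ν' →
      (∀ v, R G π₀ ν v = (σ v : ℕ) + 1) → (∀ v, R G π₀ ν' v = (σ' v : ℕ) + 1) →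
      (gactG σ G, gactC σ π₀) = (gactG σ' G, gactC σ' π₀)) ∧
    -- (C1): C(G,π₀) ≅ (G,π₀)
    (∀ (ν : List (Fin n)) (σ : Equiv.Perm (Fin n)),
      MaxLeaf R T φ G π₀ ν → (∀ v, R G π₀ ν v = (σ v : ℕ) + 1) →
      ∃ g : Equiv.Perm (Fin n),
        (gactG g G, gactC g π₀) = (gactG σ G, gactC σ π₀)) ∧
    -- (C2): C(G^g,π₀^g) = C(G,π₀)
    (∀ (g : Equiv.Perm (Fin n)) (ν μ : List (Fin n)) (σ τ : Equiv.Perm (Fin n)),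
      MaxLeaf R T φ G π₀ ν → (∀ v, R G π₀ ν v = (σ v : ℕ) + 1) →
      MaxLeaf R T φ (gactG g G) (gactC g π₀) μ →
      (∀ v, R (gactG g G) (gactC g π₀) μ v = (τ v : ℕ) + 1) →
      (gactG τ (gactG g G), gactC τ (gactC g π₀)) = (gactG σ G, gactC σ π₀)) := by
  have wd := wd_core R T hR1 φ hφ2 G π₀
  refine ⟨fun ν ν' σ σ' hν hν' hσ hσ' => wd ν ν' σ σ' hν hν' hσ hσ',
          fun ν σ hν hσ => ⟨σ, rfl⟩, ?_⟩
  intro g ν μ σ τ hν hσ hμ hτ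
  set μ' := μ.map (g⁻¹ : Equiv.Perm (Fin n)) with hμ'def
  have hmap : μ'.map g = μ := map_inv_map g μ
  have hRμ' : ∀ v, R G π₀ μ' v = (((τ * g) v : Fin n) : ℕ) + 1 := by
    intro v
    have h3 := hR3 G π₀ μ' g
    rw [hmap] at h3
    have h4 := congrFun h3 (g v)
    rw [hτ (g v)] at h4
    have h5 : gactC g (R G π₀ μ') (g v) = R G π₀ μ' v := by simp [gactC]
    rw [h5] at h4
    rw [← h4]
    simp [Equiv.Perm.mul_apply]
  have hμ'node : IsTNode (T G π₀) μ' := by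
    have h6 := node_map T hT3 (gactG g G) (gactC g π₀) g⁻¹ hμ.1
    rwa [gactG_inv_cancel, gactC_inv_cancel] at h6
  have hμ'inj : Function.Injective (R G π₀ μ') := by
    intro a b hab
    rw [hRμ' a, hRμ' b] at hab
    exact (τ * g).injective (Fin.ext (by omega))
  have hνg_node : IsTNode (T (gactG g G) (gactC g π₀)) (ν.map g) :=
    node_map T hT3 G π₀ g hν.1
  have hνg_inj : Function.Injective (R (gactG g G) (gactC g π₀) (ν.map g)) := by
    rw [hR3]
    have h7 : gactC g (R G π₀ ν) = R G π₀ ν ∘ (g⁻¹ : Equiv.Perm (Fin n)) := rfl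
    rw [h7]
    exact hν.2.1.comp (Equiv.injective _)
  have hμ'max : MaxLeaf R T φ G π₀ μ' := by
    refine ⟨hμ'node, hμ'inj, fun ρ hρn hρi => ?_⟩
    have h1 : φ G π₀ ρ ≤ φ G π₀ ν := hν.2.2 ρ hρn hρi
    have h2 : φ (gactG g G) (gactC g π₀) (ν.map g) = φ G π₀ ν := hφ3 G π₀ ν g
    have h3 : φ (gactG g G) (gactC g π₀) (ν.map g) ≤ φ (gactG g G) (gactC g π₀) μ :=
      hμ.2.2 _ hνg_node hνg_inj
    have h4 : φ (gactG g G) (gactC g π₀) μ = φ G π₀ μ' := by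
      conv_lhs => rw [← hmap]
      exact hφ3 G π₀ μ' g
    have h5 : φ G π₀ ν ≤ φ G π₀ μ' := by rw [← h2, ← h4]; exact h3
    exact le_trans h1 h5
  have hfinal := wd μ' ν (τ * g) σ hμ'max hν hRμ' hσ
  rw [gactG_mul, gactC_mul]
  exact hfinal
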